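/- arXiv:2510.15920 — 7 statements merged into one kernel-verified Lean document; each statement's English description precedes it below -/
import Mathlib

section
/- Let G : ℂ × ℝ → ℂ be such that for every real τ > 0: (i) G(z + 1, τ) = Γ(z/τ) · G(z, τ) for all z ∈ ℂ, and (ii) the modular relation G(z, τ) = (2π)^{z(τ−1)/(2τ)} · τ^{(z−z²)/(2τ) + z/2 − 1} · G(z/τ, 1/τ) holds for all z ∈ ℂ. Then for every real τ > 0 and every z ∈ ℂ, G(z + τ, τ) = (2π)^{(τ−1)/2} · τ^{−z + 1/2} · Γ(z) · G(z, τ). -/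
/-- The two functional relations (7) and (8) of the double gamma function are related
by the modular transformation (10): if `G` satisfies the first functional equation and
the modular relation for every parameter `τ > 0`, then it satisfies the second
functional equation. -/
theorem double_gamma_second_from_modular (G : ℂ → ℝ → ℂ)
    (h1 : ∀ τ : ℝ, 0 < τ → ∀ z : ℂ, G (z + 1) τ = Complex.Gamma (z / τ) * G z τ)
    (h2 : ∀ τ : ℝ, 0 < τ → ∀ z : ℂ,
      G z τ = ((2 * Real.pi : ℝ) : ℂ) ^ (z * ((τ : ℂ) - 1) / (2 * (τ : ℂ)))
        * ((τ : ℝ) : ℂ) ^ ((z - z ^ 2) / (2 * (τ : ℂ)) + z / 2 - 1) * G (z / τ) (1 / τ)) :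
    ∀ τ : ℝ, 0 < τ → ∀ z : ℂ,
      G (z + τ) τ = ((2 * Real.pi : ℝ) : ℂ) ^ (((τ : ℂ) - 1) / 2)
        * ((τ : ℝ) : ℂ) ^ (-z + 1 / 2) * Complex.Gamma z * G z τ := by
  intro τ hτ z
  have ht : ((τ : ℝ) : ℂ) ≠ 0 := by
    exact_mod_cast Complex.ofReal_ne_zero.mpr hτ.ne'
  have h2π : ((2 * Real.pi : ℝ) : ℂ) ≠ 0 :=
    Complex.ofReal_ne_zero.mpr (by positivity)
  have e1 := h2 τ hτ (z + τ)
  have e2 := h2 τ hτ z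
  have e3 := h1 (1/τ) (by positivity) (z / τ)
  have hdiv : (z + (τ : ℂ)) / (τ : ℂ) = z / τ + 1 := by field_simp
  have hG : Complex.Gamma (z / τ / ((1/τ : ℝ) : ℂ)) = Complex.Gamma z := by
    congr 1
    push_cast
    field_simp
  rw [hdiv, e3, hG] at e1
  rw [e1, e2]
  have key : ((2 * Real.pi : ℝ) : ℂ) ^ ((z + τ) * ((τ : ℂ) - 1) / (2 * (τ : ℂ)))
      * ((τ : ℝ) : ℂ) ^ (((z + τ) - (z + τ) ^ 2) / (2 * (τ : ℂ)) + (z + τ) / 2 - 1)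
      = (((2 * Real.pi : ℝ) : ℂ) ^ (((τ : ℂ) - 1) / 2)
          * ((τ : ℝ) : ℂ) ^ (-z + 1 / 2))
        * (((2 * Real.pi : ℝ) : ℂ) ^ (z * ((τ : ℂ) - 1) / (2 * (τ : ℂ)))
          * ((τ : ℝ) : ℂ) ^ ((z - z ^ 2) / (2 * (τ : ℂ)) + z / 2 - 1)) := by
    rw [show (((2 * Real.pi : ℝ) : ℂ) ^ (((τ : ℂ) - 1) / 2)
          * ((τ : ℝ) : ℂ) ^ (-z + 1 / 2))
        * (((2 * Real.pi : ℝ) : ℂ) ^ (z * ((τ : ℂ) - 1) / (2 * (τ : ℂ)))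
          * ((τ : ℝ) : ℂ) ^ ((z - z ^ 2) / (2 * (τ : ℂ)) + z / 2 - 1))
        = (((2 * Real.pi : ℝ) : ℂ) ^ (((τ : ℂ) - 1) / 2)
          * ((2 * Real.pi : ℝ) : ℂ) ^ (z * ((τ : ℂ) - 1) / (2 * (τ : ℂ))))
          * (((τ : ℝ) : ℂ) ^ (-z + 1 / 2)
          * ((τ : ℝ) : ℂ) ^ ((z - z ^ 2) / (2 * (τ : ℂ)) + z / 2 - 1)) by ring,
      ← Complex.cpow_add _ _ h2π, ← Complex.cpow_add _ _ ht]
    congr 1 <;> field_simp <;> ring_nf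
  rw [key]
  ring
end

section
/- Let τ > 0 be real and let G : ℂ → ℂ satisfy the second double-gamma functional equation with parameter τ. Then for every x ∈ ℂ and every natural number k, Γ(1 + x) · G(1 + x) · G(1 + τ + x − k) = τ^k · Γ(1 + x − k) · G(1 + τ + x) · G(1 + x − k). (Equivalently, wherever the denominators are nonzero, Γ(1+x)/Γ(1+x−k) = τ^k · G(1+τ+x) · G(1+x−k) / (G(1+x) · G(1+τ+x−k)).) -/
/-- The Gamma-quotient arising from the k-th derivative of a power function expressed
via double gamma values: if `G` satisfies the second double-gamma functional equation
with parameter `τ`, then for all `x : ℂ` and `k : ℕ`,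
`Γ(1+x) G(1+x) G(1+τ+x-k) = τ^k Γ(1+x-k) G(1+τ+x) G(1+x-k)`. -/
theorem double_gamma_derivative_quotient (τ : ℝ) (hτ : 0 < τ) (G : ℂ → ℂ)
    (hG : ∀ z : ℂ, G (z + τ) = ((2 * Real.pi : ℝ) : ℂ) ^ (((τ : ℂ) - 1) / 2)
      * ((τ : ℝ) : ℂ) ^ (-z + 1 / 2) * Complex.Gamma z * G z) :
    ∀ (x : ℂ) (k : ℕ),
      Complex.Gamma (1 + x) * G (1 + x) * G (1 + τ + x - k)
        = (τ : ℂ) ^ k * Complex.Gamma (1 + x - k) * G (1 + τ + x) * G (1 + x - k) := by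
  intro x k
  have hτ0 : ((τ : ℝ) : ℂ) ≠ 0 := by
    exact_mod_cast hτ.ne'
  have h1 : (1 + (τ : ℂ) + x - k) = (1 + x - k) + τ := by ring
  have h2 : (1 + (τ : ℂ) + x) = (1 + x) + τ := by ring
  rw [h1, h2, hG, hG]
  have hp : ((τ : ℝ) : ℂ) ^ (-(1 + x - (k : ℂ)) + 1 / 2)
      = (τ : ℂ) ^ k * ((τ : ℝ) : ℂ) ^ (-(1 + x) + 1 / 2) := by
    rw [← Complex.cpow_natCast, ← Complex.cpow_add _ _ hτ0]
    ring_nf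
  rw [hp]
  ring
end

section
/- Let τ > 0 be real, let m, n be natural numbers, and set p = q = m + n. Let a_1,…,a_p ∈ ℂ, b_1,…,b_q ∈ ℂ and positive reals α_1,…,α_p, β_1,…,β_q satisfy: α_i = β_{m+i} for 1 ≤ i ≤ n; β_i = α_{n+i} for 1 ≤ i ≤ m; and suppose there exist m₀, n₀ with 1 ≤ m₀ ≤ m and 1 ≤ n₀ ≤ n such that a_i = b_{m+i} − 1 for 1 ≤ i ≤ n₀, a_i = b_{m+i} + 1 for n₀ < i ≤ n, b_i = a_{n+i} + 1 for 1 ≤ i ≤ m₀, and b_i = a_{n+i} − 1 for m₀ < i ≤ m. Let G : ℂ → ℂ satisfy the first double-gamma functional equation with parameter τ. Then for every s ∈ ℂ: ∏_{i=1}^{m} G(b_i + β_i s) · ∏_{i=1}^{n} G(1 + τ − a_i − α_i s) · ∏_{i=m₀+1}^{m} Γ((a_{n+i} − 1 + α_{n+i} s)/τ) · ∏_{i=n₀+1}^{n} Γ((τ − b_{m+i} − β_{m+i} s)/τ) = ∏_{i=m+1}^{q} G(1 + τ − b_i − β_i s) · ∏_{i=n+1}^{p} G(a_i + α_i s) ·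 ∏_{i=1}^{m₀} Γ((b_i − 1 + β_i s)/τ) · ∏_{i=1}^{n₀} Γ((τ − a_i − α_i s)/τ). -/
/-- Proposition 1 of the paper (cross-multiplied integrand identity): under the stated
relations among the parameters, the Mellin–Barnes integrand built from double-gamma
factors equals the corresponding integrand built from Gamma factors. -/
theorem foxBarnes_reduces_to_foxH (τ : ℝ) (hτ : 0 < τ) (m n p q : ℕ)
    (hp : p = m + n) (hq : q = m + n)
    (a b : ℕ → ℂ) (α β : ℕ → ℝ)
    (hα : ∀ i ∈ Finset.Icc 1 p, 0 < α i)
    (hβ : ∀ i ∈ Finset.Icc 1 q, 0 < β i)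
    (hαβ : ∀ i ∈ Finset.Icc 1 n, α i = β (m + i))
    (hβα : ∀ i ∈ Finset.Icc 1 m, β i = α (n + i))
    (m₀ n₀ : ℕ) (hm₀1 : 1 ≤ m₀) (hm₀m : m₀ ≤ m) (hn₀1 : 1 ≤ n₀) (hn₀n : n₀ ≤ n)
    (ha1 : ∀ i ∈ Finset.Icc 1 n₀, a i = b (m + i) - 1)
    (ha2 : ∀ i ∈ Finset.Icc (n₀ + 1) n, a i = b (m + i) + 1)
    (hb1 : ∀ i ∈ Finset.Icc 1 m₀, b i = a (n + i) + 1)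
    (hb2 : ∀ i ∈ Finset.Icc (m₀ + 1) m, b i = a (n + i) - 1)
    (G : ℂ → ℂ)
    (hG : ∀ z : ℂ, G (z + 1) = Complex.Gamma (z / τ) * G z) :
    ∀ s : ℂ,
      (∏ i ∈ Finset.Icc 1 m, G (b i + ((β i : ℝ) : ℂ) * s)) *
      (∏ i ∈ Finset.Icc 1 n, G (1 + (τ : ℂ) - a i - (α i : ℂ) * s)) *
      (∏ i ∈ Finset.Icc (m₀ + 1) m,
        Complex.Gamma ((a (n + i) - 1 + (α (n + i) : ℂ) * s) / τ)) *
      (∏ i ∈ Finset.Icc (n₀ + 1) n,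
        Complex.Gamma (((τ : ℂ) - b (m + i) - (β (m + i) : ℂ) * s) / τ)) =
      (∏ i ∈ Finset.Icc (m + 1) q, G (1 + (τ : ℂ) - b i - (β i : ℂ) * s)) *
      (∏ i ∈ Finset.Icc (n + 1) p, G (a i + (α i : ℂ) * s)) *
      (∏ i ∈ Finset.Icc 1 m₀, Complex.Gamma ((b i - 1 + (β i : ℂ) * s) / τ)) *
      (∏ i ∈ Finset.Icc 1 n₀, Complex.Gamma (((τ : ℂ) - a i - (α i : ℂ) * s) / τ)) := by
  intro s
  subst hp hq
  -- reindexing lemma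
  have reindex : ∀ (f : ℕ → ℂ) (k l : ℕ),
      ∏ i ∈ Finset.Icc (k + 1) (k + l), f i = ∏ i ∈ Finset.Icc 1 l, f (k + i) := by
    intro f k l
    rw [show Finset.Icc (k + 1) (k + l) =
        (Finset.Icc 1 l).map (addLeftEmbedding k) from
      (Finset.map_add_left_Icc 1 l k).symm, Finset.prod_map]
    rfl
  rw [reindex, Nat.add_comm m n, reindex]
  -- splitting lemma
  have hIoc : ∀ x : ℕ, Finset.Icc 1 x = Finset.Ioc 0 x := fun x =>
    Finset.Icc_add_one_left_eq_Ioc 0 x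
  have split : ∀ (f : ℕ → ℂ) {k l : ℕ}, k ≤ l →
      ∏ i ∈ Finset.Icc 1 l, f i =
        (∏ i ∈ Finset.Icc 1 k, f i) * ∏ i ∈ Finset.Icc (k + 1) l, f i := by
    intro f k l h
    rw [hIoc, hIoc, Finset.Icc_add_one_left_eq_Ioc]
    exact (Finset.prod_Ioc_consecutive f (Nat.zero_le k) h).symm
  rw [split (fun i => G (b i + ((β i : ℝ) : ℂ) * s)) hm₀m,
      split (fun i => G (1 + (τ : ℂ) - a i - (α i : ℂ) * s)) hn₀n,
      split (fun i => G (1 + (τ : ℂ) - b (m + i) - (β (m + i) : ℂ) * s)) hn₀n,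
      split (fun i => G (a (n + i) + (α (n + i) : ℂ) * s)) hm₀m]
  -- pointwise identities
  have e1 : ∀ i ∈ Finset.Icc 1 m₀, G (b i + ((β i : ℝ) : ℂ) * s) =
      Complex.Gamma ((b i - 1 + (β i : ℂ) * s) / τ) *
        G (a (n + i) + (α (n + i) : ℂ) * s) := by
    intro i hi
    rw [Finset.mem_Icc] at hi
    have hb := hb1 i (Finset.mem_Icc.2 ⟨hi.1, hi.2⟩)
    have hβ' := hβα i (Finset.mem_Icc.2 ⟨hi.1, hi.2.trans hm₀m⟩)
    have harg : b i + ((β i : ℝ) : ℂ) * s = (a (n + i) + (α (n + i) : ℂ) * s) + 1 := by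
      rw [hb, hβ']; ring
    have harg2 : (b i - 1 + ((β i : ℝ) : ℂ) * s) / τ =
        (a (n + i) + (α (n + i) : ℂ) * s) / τ := by rw [hb, hβ']; try ring
    rw [harg, hG, harg2]
  have e2 : ∀ i ∈ Finset.Icc (m₀ + 1) m,
      G (a (n + i) + (α (n + i) : ℂ) * s) =
        Complex.Gamma ((a (n + i) - 1 + (α (n + i) : ℂ) * s) / τ) *
          G (b i + ((β i : ℝ) : ℂ) * s) := by
    intro i hi
    rw [Finset.mem_Icc] at hi
    have hb := hb2 i (Finset.mem_Icc.2 hi)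
    have hβ' := hβα i (Finset.mem_Icc.2 ⟨le_trans hm₀1 (le_trans (Nat.le_succ m₀) hi.1), hi.2⟩)
    have harg : a (n + i) + (α (n + i) : ℂ) * s = (b i + ((β i : ℝ) : ℂ) * s) + 1 := by
      rw [hb, hβ']; ring
    have harg2 : (a (n + i) - 1 + (α (n + i) : ℂ) * s) / τ =
        (b i + ((β i : ℝ) : ℂ) * s) / τ := by rw [hb, hβ']; try ring
    rw [harg, hG, harg2]
  have e3 : ∀ i ∈ Finset.Icc 1 n₀, G (1 + (τ : ℂ) - a i - (α i : ℂ) * s) =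
      Complex.Gamma (((τ : ℂ) - a i - (α i : ℂ) * s) / τ) *
        G (1 + (τ : ℂ) - b (m + i) - (β (m + i) : ℂ) * s) := by
    intro i hi
    rw [Finset.mem_Icc] at hi
    have ha := ha1 i (Finset.mem_Icc.2 hi)
    have hα' := hαβ i (Finset.mem_Icc.2 ⟨hi.1, hi.2.trans hn₀n⟩)
    have harg : 1 + (τ : ℂ) - a i - (α i : ℂ) * s =
        ((τ : ℂ) - a i - (α i : ℂ) * s) + 1 := by ring
    have harg2 : (τ : ℂ) - a i - (α i : ℂ) * s =
        1 + (τ : ℂ) - b (m + i) - (β (m + i) : ℂ) * s := by rw [ha, hα']; try ring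
    rw [harg, hG, harg2]
  have e4 : ∀ i ∈ Finset.Icc (n₀ + 1) n,
      G (1 + (τ : ℂ) - b (m + i) - (β (m + i) : ℂ) * s) =
        Complex.Gamma (((τ : ℂ) - b (m + i) - (β (m + i) : ℂ) * s) / τ) *
          G (1 + (τ : ℂ) - a i - (α i : ℂ) * s) := by
    intro i hi
    rw [Finset.mem_Icc] at hi
    have ha := ha2 i (Finset.mem_Icc.2 hi)
    have hα' := hαβ i (Finset.mem_Icc.2 ⟨le_trans hn₀1 (le_trans (Nat.le_succ n₀) hi.1), hi.2⟩)
    have harg : 1 + (τ : ℂ) - b (m + i) - (β (m + i) : ℂ) * s =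
        ((τ : ℂ) - b (m + i) - (β (m + i) : ℂ) * s) + 1 := by ring
    have harg2 : (τ : ℂ) - b (m + i) - (β (m + i) : ℂ) * s =
        1 + (τ : ℂ) - a i - (α i : ℂ) * s := by rw [ha, hα']; try ring
    rw [harg, hG, harg2]
  rw [Finset.prod_congr rfl e1, Finset.prod_congr rfl e2,
      Finset.prod_congr rfl e3, Finset.prod_congr rfl e4,
      Finset.prod_mul_distrib, Finset.prod_mul_distrib,
      Finset.prod_mul_distrib, Finset.prod_mul_distrib]
  ring
end

section
/- Let a, m > 0 and l > −1/a be real numbers, set τ = 1/(a·m) and φ = (1 + a·l)·τ, and let G : ℂ → ℂ satisfy the first double-gamma functional equation with parameter τ. Then for every natural number n, cₙ · G(φ) · G(φ + a·τ + n) = G(φ + a·τ) · G(φ + n), where cₙ are the Kilbas–Saigo coefficients (c₀ = 1, cₙ = ∏_{k=0}^{n−1} Γ(1 + a(km + l))/Γ(1 + a(km + l + 1)) for n ≥ 1). -/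
/-- Key step of Proposition 6 of the paper: the Kilbas–Saigo coefficients expressed in
terms of double gamma values, `cₙ G(φ) G(φ+aτ+n) = G(φ+aτ) G(φ+n)`. -/
theorem kilbasSaigo_coeff_double_gamma (a m l : ℝ) (ha : 0 < a) (hm : 0 < m)
    (hl : -1 / a < l) (τ φ : ℝ) (hτdef : τ = 1 / (a * m)) (hφdef : φ = (1 + a * l) * τ)
    (G : ℂ → ℂ)
    (hG : ∀ z : ℂ, G (z + 1) = Complex.Gamma (z / τ) * G z)
    (c : ℕ → ℂ)
    (hc : ∀ n : ℕ, c n = ∏ k ∈ Finset.range n,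
      Complex.Gamma ((1 + a * (k * m + l) : ℝ)) /
        Complex.Gamma ((1 + a * (k * m + l + 1) : ℝ))) :
    ∀ n : ℕ,
      c n * G (φ : ℂ) * G ((φ : ℂ) + (a : ℂ) * (τ : ℂ) + (n : ℂ))
        = G ((φ : ℂ) + (a : ℂ) * (τ : ℂ)) * G ((φ : ℂ) + (n : ℂ)) := by
  have h1al : 0 < 1 + a * l := by
    have h := (div_lt_iff₀ ha).mp hl
    nlinarith
  have hac : (a : ℂ) ≠ 0 := by exact_mod_cast ha.ne'
  have hmc : (m : ℂ) ≠ 0 := by exact_mod_cast hm.ne'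
  have hτc : (τ : ℂ) ≠ 0 := by
    rw [Complex.ofReal_ne_zero, hτdef]
    positivity
  intro n
  induction n with
  | zero => simp [hc 0]; ring
  | succ n ih =>
    have hx : (0:ℝ) < 1 + a * (n * m + l) := by nlinarith [mul_nonneg (Nat.cast_nonneg (α := ℝ) n) hm.le]
    have hy : (0:ℝ) < 1 + a * (n * m + l + 1) := by nlinarith [mul_nonneg (Nat.cast_nonneg (α := ℝ) n) hm.le]
    have e1 : ((φ:ℂ) + n) / τ = ((1 + a * (n*m + l) : ℝ) : ℂ) := by
      subst hφdef hτdef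
      push_cast
      field_simp
      ring
    have e2 : ((φ:ℂ) + a * τ + n) / τ = ((1 + a * (n*m + l + 1) : ℝ) : ℂ) := by
      subst hφdef hτdef
      push_cast
      field_simp
      ring
    have hΓy : Complex.Gamma ((1 + a * (n*m + l + 1) : ℝ)) ≠ 0 := by
      rw [Complex.Gamma_ofReal]
      exact_mod_cast (Real.Gamma_pos_of_pos hy).ne'
    have g1 : G ((φ:ℂ) + (n+1 : ℕ)) = Complex.Gamma ((1 + a * (n*m + l) : ℝ)) * G ((φ:ℂ) + n) := by
      rw [Nat.cast_add, Nat.cast_one, show (φ:ℂ) + (n + 1) = ((φ:ℂ) + n) + 1 by ring, hG, e1]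
    have g2 : G ((φ:ℂ) + a * τ + (n+1 : ℕ))
        = Complex.Gamma ((1 + a * (n*m + l + 1) : ℝ)) * G ((φ:ℂ) + a * τ + n) := by
      rw [Nat.cast_add, Nat.cast_one, show (φ:ℂ) + a * τ + (n + 1) = ((φ:ℂ) + a * τ + n) + 1 by ring, hG, e2]
    have hcn : c (n+1) = c n * (Complex.Gamma ((1 + a * (n*m + l) : ℝ)) /
        Complex.Gamma ((1 + a * (n*m + l + 1) : ℝ))) := by
      rw [hc (n+1), hc n, Finset.prod_range_succ]
    rw [g1, g2, hcn]
    push_cast at hΓy ⊢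
    field_simp
    linear_combination Complex.Gamma (1 + (a:ℂ) * (n * m + l)) * ih
end

section
/- Let a, m > 0 and l > −1/a be real numbers and let cₙ be the Kilbas–Saigo coefficients: c₀ = 1 and cₙ = ∏_{k=0}^{n−1} Γ(1 + a(km + l))/Γ(1 + a(km + l + 1)) for n ≥ 1. Then for every z ∈ ℂ the series Σ_{n=0}^∞ cₙ zⁿ converges absolutely; i.e., the Kilbas–Saigo function E_{a,m,l}(z) = Σ_{n=0}^∞ cₙ zⁿ is defined (and entire) on all of ℂ. -/
open Real Filter

/-- Quantitative decay of the Gamma ratio, via log-convexity. -/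
lemma gamma_ratio_le (a : ℝ) (ha : 0 < a) {x : ℝ} (hx : 2 ≤ x) :
    Real.Gamma x / Real.Gamma (x + a) ≤ (x - 1) ^ (-(a / (1 + a))) := by
  have h1a : 0 < 1 + a := by linarith
  set t : ℝ := 1 / (1 + a) with ht
  have ht0 : 0 < t := by positivity
  have ht1 : t < 1 := by
    rw [ht, div_lt_one h1a]; linarith
  have hxm1 : (0:ℝ) < x - 1 := by linarith
  have hΓxm1 : 0 < Real.Gamma (x - 1) := Real.Gamma_pos_of_pos hxm1
  have hΓx : 0 < Real.Gamma x := Real.Gamma_pos_of_pos (by linarith)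
  have hΓxa : 0 < Real.Gamma (x + a) := Real.Gamma_pos_of_pos (by linarith)
  -- monotonicity : Γ x ≤ Γ (x+a)
  have hmono : Real.Gamma x ≤ Real.Gamma (x + a) :=
    (Real.Gamma_strictMonoOn_Ici hx (by simp only [Set.mem_Ici]; linarith)
      (by linarith)).le
  -- log-convexity
  have hcomb : t * (x + a) + (1 - t) * (x - 1) = x := by
    field_simp [ht]
    have hta1 : t * (1 + a) = 1 := by rw [ht]; exact div_mul_cancel₀ 1 h1a.ne'
    linear_combination hta1
  have hconv := Real.convexOn_log_Gamma.2 (Set.mem_Ioi.2 (show (0:ℝ) < x + a by linarith))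
    (Set.mem_Ioi.2 hxm1) ht0.le (by linarith : (0:ℝ) ≤ 1 - t) (by ring)
  simp only [smul_eq_mul, Function.comp_apply] at hconv
  rw [hcomb] at hconv
  -- exponentiate
  have key : Real.Gamma x ≤ Real.Gamma (x + a) ^ t * Real.Gamma (x - 1) ^ (1 - t) := by
    have := Real.exp_le_exp.2 hconv
    rwa [Real.exp_log hΓx, Real.exp_add, mul_comm t, mul_comm (1 - t),
      ← Real.rpow_def_of_pos hΓxa, ← Real.rpow_def_of_pos hΓxm1] at this
  -- divide by Γ(x+a)
  have step1 : Real.Gamma x / Real.Gamma (x + a)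
      ≤ (Real.Gamma (x - 1) / Real.Gamma (x + a)) ^ (1 - t) := by
    rw [Real.div_rpow hΓxm1.le hΓxa.le]
    rw [div_le_div_iff₀ hΓxa (by positivity)]
    calc Real.Gamma x * Real.Gamma (x + a) ^ (1 - t)
        ≤ (Real.Gamma (x + a) ^ t * Real.Gamma (x - 1) ^ (1 - t)) *
            Real.Gamma (x + a) ^ (1 - t) := by
          gcongr
      _ = Real.Gamma (x - 1) ^ (1 - t) * Real.Gamma (x + a) := by
          rw [mul_right_comm, ← Real.rpow_add hΓxa]
          simp [mul_comm]
  -- Γ(x-1)/Γ(x+a) ≤ Γ(x-1)/Γ(x) = 1/(x-1)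
  have step2 : Real.Gamma (x - 1) / Real.Gamma (x + a) ≤ 1 / (x - 1) := by
    have hΓeq : Real.Gamma x = (x - 1) * Real.Gamma (x - 1) := by
      have h2 := Real.Gamma_add_one hxm1.ne'
      simpa using h2
    have h3 : Real.Gamma (x - 1) / Real.Gamma (x + a) ≤ Real.Gamma (x - 1) / Real.Gamma x :=
      div_le_div_of_nonneg_left hΓxm1.le hΓx hmono
    refine h3.trans (le_of_eq ?_)
    rw [hΓeq]
    field_simp
  calc Real.Gamma x / Real.Gamma (x + a)
      ≤ (Real.Gamma (x - 1) / Real.Gamma (x + a)) ^ (1 - t) := step1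
    _ ≤ (1 / (x - 1)) ^ (1 - t) := by
        apply Real.rpow_le_rpow (by positivity) step2 (by linarith)
    _ = (x - 1) ^ (-(a / (1 + a))) := by
        rw [one_div, ← Real.rpow_neg_one, ← Real.rpow_mul hxm1.le]
        congr 1
        rw [ht]
        field_simp
        ring

/-- The Kilbas–Saigo series `Σ cₙ zⁿ` converges absolutely for every `z ∈ ℂ`,
i.e. the Kilbas–Saigo function is defined (and entire) on all of `ℂ`. -/
theorem kilbasSaigo_summable (a m l : ℝ) (ha : 0 < a) (hm : 0 < m) (hl : -1 / a < l)
    (c : ℕ → ℝ)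
    (hc : ∀ n : ℕ, c n = ∏ k ∈ Finset.range n,
      Real.Gamma (1 + a * (k * m + l)) / Real.Gamma (1 + a * (k * m + l + 1))) :
    ∀ z : ℂ, Summable (fun n : ℕ => ‖(c n : ℂ) * z ^ n‖) := by
  intro z
  set R : ℕ → ℝ := fun n =>
    Real.Gamma (1 + a * (n * m + l)) / Real.Gamma (1 + a * (n * m + l + 1)) with hR
  have hal : -1 < a * l := by
    have h := (mul_lt_mul_iff_right₀ ha).2 hl
    calc (-1 : ℝ) = a * (-1 / a) := by field_simp
      _ < a * l := h
  have harg : ∀ n : ℕ, 0 < 1 + a * (n * m + l) := by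
    intro n
    have h1 : (0:ℝ) ≤ a * ((n:ℝ) * m) := by positivity
    nlinarith
  have harg' : ∀ n : ℕ, 0 < 1 + a * (n * m + l + 1) := by
    intro n
    have := harg n
    nlinarith
  have hRpos : ∀ n, 0 < R n := fun n =>
    div_pos (Real.Gamma_pos_of_pos (harg n)) (Real.Gamma_pos_of_pos (harg' n))
  have hcpos : ∀ n, 0 < c n := by
    intro n
    rw [hc n]
    exact Finset.prod_pos fun k _ =>
      div_pos (Real.Gamma_pos_of_pos (harg k)) (Real.Gamma_pos_of_pos (harg' k))
  have hrec : ∀ n, c (n + 1) = c n * R n := by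
    intro n
    rw [hc, hc, Finset.prod_range_succ]
  -- the argument sequence tends to infinity
  have hx : Tendsto (fun n : ℕ => 1 + a * ((n : ℝ) * m + l)) atTop atTop := by
    have h1 : Tendsto (fun n : ℕ => (n : ℝ)) atTop atTop := tendsto_natCast_atTop_atTop
    have h2 : Tendsto (fun n : ℕ => a * m * (n : ℝ)) atTop atTop :=
      (tendsto_const_mul_atTop_of_pos (by positivity)).2 h1
    have h3 := tendsto_atTop_add_const_right atTop (1 + a * l) h2
    refine h3.congr fun n => ?_
    ring
  -- R tends to 0
  have hRto : Tendsto R atTop (nhds 0) := by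
    have hb : Tendsto (fun n : ℕ => (1 + a * ((n:ℝ) * m + l) - 1) ^ (-(a / (1 + a))))
        atTop (nhds 0) := by
      have h4 : Tendsto (fun n : ℕ => 1 + a * ((n:ℝ) * m + l) - 1) atTop atTop :=
        tendsto_atTop_add_const_right atTop (-1) hx
      exact (tendsto_rpow_neg_atTop (div_pos ha (by linarith))).comp h4
    refine squeeze_zero' (Eventually.of_forall fun n => (hRpos n).le) ?_ hb
    filter_upwards [hx.eventually_ge_atTop 2] with n hn
    have := gamma_ratio_le a ha hn
    rw [hR]
    simp only []
    convert this using 3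
    ring
  -- ratio test
  have hev : ∀ᶠ n in atTop, R n * ‖z‖ < 1 / 2 := by
    have : Tendsto (fun n => R n * ‖z‖) atTop (nhds (0 * ‖z‖)) := hRto.mul_const _
    rw [zero_mul] at this
    exact this.eventually_lt_const (by norm_num)
  refine summable_of_ratio_norm_eventually_le (r := 1 / 2) (by norm_num) ?_
  filter_upwards [hev] with n hn
  have hfn : ‖(c n : ℂ) * z ^ n‖ = c n * ‖z‖ ^ n := by
    rw [norm_mul, norm_pow, Complex.norm_real, Real.norm_of_nonneg (hcpos n).le]
  have hfn1 : ‖(c (n + 1) : ℂ) * z ^ (n + 1)‖ = (R n * ‖z‖) * (c n * ‖z‖ ^ n) := by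
    rw [norm_mul, norm_pow, Complex.norm_real, Real.norm_of_nonneg (hcpos (n+1)).le,
      hrec n, pow_succ]
    ring
  rw [norm_norm, norm_norm, hfn, hfn1]
  have hfnn : 0 ≤ c n * ‖z‖ ^ n := mul_nonneg (hcpos n).le (pow_nonneg (norm_nonneg z) n)
  nlinarith [hRpos n, hfnn]
end

section
/- Let a, m > 0, l > −1/a and 0 < ν < a be real numbers, and let cₙ be the Kilbas–Saigo coefficients: c₀ = 1 and cₙ = ∏_{k=0}^{n−1} Γ(1 + a(km + l))/Γ(1 + a(km + l + 1)) for n ≥ 1. Then for every w ∈ ℂ the series Σ_{n=0}^∞ cₙ · Γ(1 + nν) · wⁿ converges absolutely (i.e., the power series Σ cₙ Γ(1 + nν) wⁿ has infinite radius of convergence). -/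
open Real Filter Set Topology

lemma gamma_ratio_upper (x s : ℝ) (hx : 0 < x) (hs : 0 < s) :
    Real.Gamma (x + s) ≤ Real.Gamma x * (x + s) ^ s := by
  have hxs : 0 < x + s := by linarith
  have hslope := Real.convexOn_log_Gamma.slope_mono_adjacent
    (x := x) (y := x + s) (z := x + s + 1)
    (Set.mem_Ioi.mpr hx) (Set.mem_Ioi.mpr (by linarith)) (by linarith) (by linarith)
  have hG : 0 < Real.Gamma (x + s) := Real.Gamma_pos_of_pos hxs
  have hGx : 0 < Real.Gamma x := Real.Gamma_pos_of_pos hx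
  simp only [Function.comp] at hslope
  rw [show x + s - x = s from by ring, show x + s + 1 - (x + s) = 1 from by ring,
    Real.Gamma_add_one (ne_of_gt hxs), Real.log_mul (ne_of_gt hxs) (ne_of_gt hG)] at hslope
  have hlog : Real.log (Real.Gamma (x + s)) ≤ Real.log (Real.Gamma x) + s * Real.log (x + s) := by
    rw [div_le_iff₀ hs] at hslope
    nlinarith
  calc Real.Gamma (x + s) = Real.exp (Real.log (Real.Gamma (x + s))) := (Real.exp_log hG).symm
    _ ≤ Real.exp (Real.log (Real.Gamma x) + s * Real.log (x + s)) := Real.exp_le_exp.mpr hlog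
    _ = Real.Gamma x * (x + s) ^ s := by
        rw [Real.exp_add, Real.exp_log hGx, Real.rpow_def_of_pos hxs, mul_comm s]

lemma gamma_ratio_lower (x s : ℝ) (hx : 1 < x) (hs : 0 < s) :
    Real.Gamma x * (x - 1) ^ s ≤ Real.Gamma (x + s) := by
  have hx1 : 0 < x - 1 := by linarith
  have hxs : 0 < x + s := by linarith
  have hslope := Real.convexOn_log_Gamma.slope_mono_adjacent
    (x := x - 1) (y := x) (z := x + s)
    (Set.mem_Ioi.mpr hx1) (Set.mem_Ioi.mpr hxs) (by linarith) (by linarith)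
  have hG : 0 < Real.Gamma (x + s) := Real.Gamma_pos_of_pos hxs
  have hGx : 0 < Real.Gamma x := Real.Gamma_pos_of_pos (by linarith)
  have hGx1 : 0 < Real.Gamma (x - 1) := Real.Gamma_pos_of_pos hx1
  simp only [Function.comp] at hslope
  rw [show x - (x - 1) = 1 from by ring, show x + s - x = s from by ring] at hslope
  have hrec : Real.Gamma x = (x - 1) * Real.Gamma (x - 1) := by
    have := Real.Gamma_add_one (ne_of_gt hx1)
    rw [show x - 1 + 1 = x from by ring] at this
    rw [this]
  rw [hrec, Real.log_mul (ne_of_gt hx1) (ne_of_gt hGx1)] at hslope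
  have hlog : Real.log (Real.Gamma x) + s * Real.log (x - 1) ≤ Real.log (Real.Gamma (x + s)) := by
    rw [div_one, le_div_iff₀ hs] at hslope
    rw [hrec, Real.log_mul (ne_of_gt hx1) (ne_of_gt hGx1)]
    nlinarith
  calc Real.Gamma x * (x - 1) ^ s
      = Real.exp (Real.log (Real.Gamma x) + s * Real.log (x - 1)) := by
        rw [Real.exp_add, Real.exp_log hGx, Real.rpow_def_of_pos hx1, mul_comm s]
    _ ≤ Real.exp (Real.log (Real.Gamma (x + s))) := Real.exp_le_exp.mpr hlog
    _ = Real.Gamma (x + s) := Real.exp_log hG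

/-- Convergence half of the paper's claim about the term-by-term Laplace transform
series of the Kilbas–Saigo function: for `0 < ν < a`, the power series
`Σ cₙ Γ(1 + nν) wⁿ` converges absolutely for every `w ∈ ℂ`. -/
theorem kilbasSaigo_laplace_series_summable (a m l ν : ℝ) (ha : 0 < a) (hm : 0 < m)
    (hl : -1 / a < l) (hν0 : 0 < ν) (hνa : ν < a)
    (c : ℕ → ℝ)
    (hc : ∀ n : ℕ, c n = ∏ k ∈ Finset.range n,
      Real.Gamma (1 + a * (k * m + l)) / Real.Gamma (1 + a * (k * m + l + 1))) :
    ∀ w : ℂ, Summable (fun n : ℕ => ‖((c n * Real.Gamma (1 + n * ν) : ℝ) : ℂ) * w ^ n‖) := by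
  intro w
  set W : ℝ := ‖w‖ with hWdef
  have hW0 : 0 ≤ W := norm_nonneg w
  have hal : (-1 : ℝ) < a * l := by
    have h := (mul_lt_mul_iff_right₀ ha).mpr hl
    rwa [show a * (-1 / a) = -1 by field_simp] at h
  -- positivity of arguments
  have harg : ∀ k : ℕ, 0 < 1 + a * ((k : ℝ) * m + l) := by
    intro k
    have : 0 ≤ a * ((k : ℝ) * m) := by positivity
    nlinarith
  have harg' : ∀ k : ℕ, 0 < 1 + a * ((k : ℝ) * m + l + 1) := by
    intro k
    have h := harg k
    nlinarith
  have hcpos : ∀ n, 0 < c n := by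
    intro n
    rw [hc]
    exact Finset.prod_pos fun k _ =>
      div_pos (Real.Gamma_pos_of_pos (harg k)) (Real.Gamma_pos_of_pos (harg' k))
  have hGn : ∀ n : ℕ, 0 < Real.Gamma (1 + (n : ℝ) * ν) :=
    fun n => Real.Gamma_pos_of_pos (by positivity)
  have hnorm : ∀ n : ℕ, ‖((c n * Real.Gamma (1 + n * ν) : ℝ) : ℂ) * w ^ n‖
      = c n * Real.Gamma (1 + (n : ℝ) * ν) * W ^ n := by
    intro n
    rw [norm_mul, norm_pow, Complex.norm_real,
      Real.norm_of_nonneg (mul_nonneg (hcpos n).le (hGn n).le)]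
  apply summable_of_ratio_norm_eventually_le (r := 1/2) (by norm_num)
  simp only [norm_norm]
  -- the constant
  set K : ℝ := W * (1 + 2*ν) ^ ν / (a * m / 2) ^ a with hKdef
  have hK0 : 0 ≤ K := by
    rw [hKdef]
    have := Real.rpow_nonneg (by positivity : (0:ℝ) ≤ 1 + 2*ν) ν
    have := Real.rpow_nonneg (by positivity : (0:ℝ) ≤ a*m/2) a
    positivity
  -- eventually facts
  have ev1 : ∀ᶠ n : ℕ in atTop, 1 ≤ n := eventually_ge_atTop 1
  have ev2 : ∀ᶠ n : ℕ in atTop, (2 * |l| / m : ℝ) ≤ (n : ℝ) :=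
    tendsto_natCast_atTop_atTop.eventually_ge_atTop _
  have hKt : Tendsto (fun n : ℕ => K * (n : ℝ) ^ (ν - a)) atTop (𝓝 0) := by
    have h1 : Tendsto (fun x : ℝ => x ^ (-(a - ν))) atTop (𝓝 0) :=
      tendsto_rpow_neg_atTop (by linarith)
    have h2 : Tendsto (fun n : ℕ => ((n : ℝ)) ^ (ν - a)) atTop (𝓝 0) := by
      have := h1.comp tendsto_natCast_atTop_atTop
      simpa [show -(a - ν) = ν - a by ring, Function.comp_def] using this
    simpa using h2.const_mul K
  have ev3 : ∀ᶠ n : ℕ in atTop, K * (n : ℝ) ^ (ν - a) < 1/2 :=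
    hKt.eventually (gt_mem_nhds (by norm_num))
  filter_upwards [ev1, ev2, ev3] with n hn1 hn2 hn3
  rw [hnorm, hnorm]
  have hn1' : (1 : ℝ) ≤ (n : ℝ) := by exact_mod_cast hn1
  -- key quantities
  set x : ℝ := 1 + a * ((n : ℝ) * m + l) with hxdef
  have hlow : a * m / 2 * (n : ℝ) ≤ x - 1 := by
    have hml : 2 * |l| ≤ (n:ℝ) * m := by
      rw [div_le_iff₀ hm] at hn2
      nlinarith
    have habs : -l ≤ |l| := neg_le_abs l
    rw [hxdef]
    nlinarith
  have hx1 : 1 < x := by nlinarith [mul_pos (mul_pos ha hm) (lt_of_lt_of_le one_pos hn1')]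
  -- step A : c (n+1) = c n * (Γ x / Γ (x+a))
  have hstepA : c (n+1) = c n * (Real.Gamma x / Real.Gamma (x + a)) := by
    rw [hc (n+1), hc n, Finset.prod_range_succ]
    congr 2
    rw [hxdef]; ring
  -- step B : Γ(1+(n+1)ν) ≤ Γ(1+nν) * (1+nν+ν)^ν
  have hstepB : Real.Gamma (1 + ((n:ℝ)+1) * ν)
      ≤ Real.Gamma (1 + (n:ℝ) * ν) * (1 + (n:ℝ) * ν + ν) ^ ν := by
    have := gamma_ratio_upper (1 + (n:ℝ) * ν) ν (by positivity) hν0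
    rwa [show 1 + ((n:ℝ)+1) * ν = 1 + (n:ℝ) * ν + ν by ring]
  -- step C : Γ x / Γ (x+a) ≤ ((x-1)^a)⁻¹
  have hstepC : Real.Gamma x / Real.Gamma (x + a) ≤ ((x - 1) ^ a)⁻¹ := by
    have hle := gamma_ratio_lower x a hx1 ha
    have hGxa : 0 < Real.Gamma (x + a) := Real.Gamma_pos_of_pos (by linarith)
    have hpow : (0:ℝ) < (x - 1) ^ a := Real.rpow_pos_of_pos (by linarith) a
    rw [div_le_iff₀ hGxa, inv_mul_eq_div, le_div_iff₀ hpow]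
    linarith [hle]
  -- the ratio bound
  have hxpos : (0:ℝ) < x - 1 := by linarith
  have hnpos : (0:ℝ) < (n:ℝ) := by linarith
  have hratio : Real.Gamma x / Real.Gamma (x + a) * (1 + (n:ℝ) * ν + ν) ^ ν * W ≤ 1/2 := by
    have hbase1 : 1 + (n:ℝ) * ν + ν ≤ (1 + 2*ν) * (n:ℝ) := by nlinarith
    have hA : Real.Gamma x / Real.Gamma (x + a) ≤ ((a * m / 2 * (n:ℝ)) ^ a)⁻¹ := by
      refine hstepC.trans (inv_anti₀ (by positivity) ?_)
      exact Real.rpow_le_rpow (by positivity) hlow ha.le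
    have hB : (1 + (n:ℝ) * ν + ν) ^ ν ≤ ((1 + 2*ν) * (n:ℝ)) ^ ν :=
      Real.rpow_le_rpow (by positivity) hbase1 hν0.le
    have heq : ((a * m / 2 * (n:ℝ)) ^ a)⁻¹ * ((1 + 2*ν) * (n:ℝ)) ^ ν * W = K * (n:ℝ) ^ (ν - a) := by
      have hc1 : (0:ℝ) < (a*m/2) ^ a := Real.rpow_pos_of_pos (by positivity) a
      have hc2 : (0:ℝ) < (n:ℝ) ^ a := Real.rpow_pos_of_pos hnpos a
      rw [Real.mul_rpow (by positivity) hnpos.le, Real.mul_rpow (by positivity) hnpos.le,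
        Real.rpow_sub hnpos, hKdef]
      field_simp
    have h1 : 0 ≤ (1 + (n:ℝ) * ν + ν) ^ ν := Real.rpow_nonneg (by positivity) ν
    calc Real.Gamma x / Real.Gamma (x + a) * (1 + (n:ℝ) * ν + ν) ^ ν * W
        ≤ ((a * m / 2 * (n:ℝ)) ^ a)⁻¹ * ((1 + 2*ν) * (n:ℝ)) ^ ν * W :=
          mul_le_mul_of_nonneg_right (mul_le_mul hA hB h1 (by positivity)) hW0
      _ = K * (n:ℝ) ^ (ν - a) := heq
      _ ≤ 1/2 := hn3.le
  -- conclude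
  have key : c (n+1) * Real.Gamma (1 + (↑(n+1):ℝ) * ν) * W ^ (n+1)
      ≤ 1/2 * (c n * Real.Gamma (1 + (n:ℝ) * ν) * W ^ n) := by
    push_cast
    rw [hstepA, pow_succ]
    calc c n * (Real.Gamma x / Real.Gamma (x + a)) * Real.Gamma (1 + ((n:ℝ)+1) * ν) * (W ^ n * W)
        ≤ c n * (Real.Gamma x / Real.Gamma (x + a)) *
            (Real.Gamma (1 + (n:ℝ) * ν) * (1 + (n:ℝ) * ν + ν) ^ ν) * (W ^ n * W) := by
          have h1 : 0 ≤ Real.Gamma x / Real.Gamma (x + a) :=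
            (div_pos (Real.Gamma_pos_of_pos (by linarith))
              (Real.Gamma_pos_of_pos (by linarith))).le
          have h2 : 0 ≤ W ^ n * W := by positivity
          exact mul_le_mul_of_nonneg_right
            (mul_le_mul_of_nonneg_left hstepB (mul_nonneg (hcpos n).le h1)) h2
      _ = (c n * Real.Gamma (1 + (n:ℝ) * ν) * W ^ n) *
            (Real.Gamma x / Real.Gamma (x + a) * (1 + (n:ℝ) * ν + ν) ^ ν * W) := by ring
      _ ≤ (c n * Real.Gamma (1 + (n:ℝ) * ν) * W ^ n) * (1/2) := by
          have hb : 0 ≤ c n * Real.Gamma (1 + (n:ℝ) * ν) * W ^ n :=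
            mul_nonneg (mul_nonneg (hcpos n).le (hGn n).le) (by positivity)
          exact mul_le_mul_of_nonneg_left hratio hb
      _ = 1/2 * (c n * Real.Gamma (1 + (n:ℝ) * ν) * W ^ n) := by ring
  exact_mod_cast key
end

section
/- Let a, m > 0, l > −1/a and ν > a be real numbers, and let cₙ be the Kilbas–Saigo coefficients: c₀ = 1 and cₙ = ∏_{k=0}^{n−1} Γ(1 + a(km + l))/Γ(1 + a(km + l + 1)) for n ≥ 1. Then for every real w ≠ 0 the sequence cₙ · Γ(1 + nν) · |w|ⁿ tends to ∞ as n → ∞; in particular the power series Σ_{n=0}^∞ cₙ Γ(1 + nν) wⁿ has radius of convergence 0. -/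
open Real Filter

lemma gamma_frac_upper {x θ : ℝ} (hx : 0 < x) (h0 : 0 ≤ θ) (h1 : θ ≤ 1) :
    Real.Gamma (x + θ) ≤ Real.Gamma x * x ^ θ := by
  have hΓx : 0 < Real.Gamma x := Real.Gamma_pos_of_pos hx
  have hΓxθ : 0 < Real.Gamma (x + θ) := Real.Gamma_pos_of_pos (by linarith)
  have key := Real.convexOn_log_Gamma.2 (Set.mem_Ioi.mpr hx)
    (Set.mem_Ioi.mpr (by linarith : (0:ℝ) < x + 1)) (by linarith : (0:ℝ) ≤ 1 - θ) h0 (by ring)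
  rw [show (1 - θ) • x + θ • (x + 1) = x + θ by simp [smul_eq_mul]; ring] at key
  simp only [Function.comp_apply] at key
  rw [Real.Gamma_add_one hx.ne', Real.log_mul hx.ne' hΓx.ne'] at key
  calc Real.Gamma (x + θ) = Real.exp (Real.log (Real.Gamma (x + θ))) := (Real.exp_log hΓxθ).symm
    _ ≤ Real.exp ((1 - θ) * Real.log (Real.Gamma x)
        + θ * (Real.log x + Real.log (Real.Gamma x))) := Real.exp_le_exp.mpr key
    _ = Real.Gamma x * x ^ θ := by
        rw [show (1 - θ) * Real.log (Real.Gamma x) + θ * (Real.log x + Real.log (Real.Gamma x))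
          = Real.log (Real.Gamma x) + θ * Real.log x by ring, Real.exp_add,
          Real.exp_log hΓx, Real.rpow_def_of_pos hx, mul_comm θ]

lemma gamma_frac_lower {x θ : ℝ} (hx : 0 < x) (h0 : 0 ≤ θ) (h1 : θ ≤ 1) :
    Real.Gamma x * x ≤ Real.Gamma (x + θ) * (x + θ) ^ (1 - θ) := by
  have hΓx : 0 < Real.Gamma x := Real.Gamma_pos_of_pos hx
  have hxθ : 0 < x + θ := by linarith
  have hΓxθ : 0 < Real.Gamma (x + θ) := Real.Gamma_pos_of_pos hxθ
  have key := Real.convexOn_log_Gamma.2 (Set.mem_Ioi.mpr hxθ)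
    (Set.mem_Ioi.mpr (by linarith : (0:ℝ) < x + θ + 1)) h0 (by linarith : (0:ℝ) ≤ 1 - θ) (by ring)
  rw [show θ • (x + θ) + (1 - θ) • (x + θ + 1) = x + 1 by simp [smul_eq_mul]; ring] at key
  simp only [Function.comp_apply] at key
  rw [Real.Gamma_add_one hx.ne', Real.log_mul hx.ne' hΓx.ne',
    Real.Gamma_add_one hxθ.ne', Real.log_mul hxθ.ne' hΓxθ.ne'] at key
  calc Real.Gamma x * x = Real.exp (Real.log x + Real.log (Real.Gamma x)) := by
        rw [Real.exp_add, Real.exp_log hΓx, Real.exp_log hx]; ring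
    _ ≤ Real.exp (θ * Real.log (Real.Gamma (x + θ))
        + (1 - θ) * (Real.log (x + θ) + Real.log (Real.Gamma (x + θ)))) := Real.exp_le_exp.mpr key
    _ = Real.Gamma (x + θ) * (x + θ) ^ (1 - θ) := by
        rw [show θ * Real.log (Real.Gamma (x + θ))
          + (1 - θ) * (Real.log (x + θ) + Real.log (Real.Gamma (x + θ)))
          = Real.log (Real.Gamma (x + θ)) + (1 - θ) * Real.log (x + θ) by ring, Real.exp_add,
          Real.exp_log hΓxθ, Real.rpow_def_of_pos hxθ, mul_comm (1 - θ)]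

lemma gamma_shift_upper : ∀ n : ℕ, ∀ x s : ℝ, 0 < x → 0 ≤ s → s ≤ n →
    Real.Gamma (x + s) ≤ Real.Gamma x * (x + s) ^ s := by
  intro n
  induction n with
  | zero =>
    intro x s hx h0 h1
    have hs : s = 0 := le_antisymm (by exact_mod_cast h1) h0
    subst hs
    simp
  | succ n ih =>
    intro x s hx h0 hsn
    have hxs : 0 < x + s := by linarith
    by_cases hs1 : s ≤ 1
    · calc Real.Gamma (x + s) ≤ Real.Gamma x * x ^ s := gamma_frac_upper hx h0 hs1
        _ ≤ Real.Gamma x * (x + s) ^ s := by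
            gcongr
            all_goals linarith [(Real.Gamma_pos_of_pos hx).le]
    · have h1 : (0:ℝ) ≤ s - 1 := by linarith
      have hih := ih (x + 1) (s - 1) (by linarith) h1 (by push_cast at hsn ⊢; linarith)
      rw [show x + 1 + (s - 1) = x + s by ring, Real.Gamma_add_one hx.ne'] at hih
      have he : (x + s) ^ (s - 1) * (x + s) = (x + s) ^ s := by
        rw [← Real.rpow_add_one hxs.ne' (s - 1), sub_add_cancel]
      have hp : 0 ≤ (x + s) ^ (s - 1) := Real.rpow_nonneg hxs.le _
      calc Real.Gamma (x + s) ≤ x * Real.Gamma x * (x + s) ^ (s - 1) := hih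
        _ ≤ (x + s) * Real.Gamma x * (x + s) ^ (s - 1) := by
            gcongr
            all_goals linarith [(Real.Gamma_pos_of_pos hx).le]
        _ = Real.Gamma x * ((x + s) ^ (s - 1) * (x + s)) := by ring
        _ = Real.Gamma x * (x + s) ^ s := by rw [he]

lemma gamma_shift_lower : ∀ n : ℕ, ∀ x s : ℝ, 0 < x → 0 ≤ s → s ≤ n →
    Real.Gamma x * x ^ s * (x / (x + s)) ≤ Real.Gamma (x + s) := by
  intro n
  induction n with
  | zero =>
    intro x s hx h0 h1
    have hs : s = 0 := le_antisymm (by exact_mod_cast h1) h0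
    subst hs
    simp [hx.ne']
  | succ n ih =>
    intro x s hx h0 hsn
    have hxs : 0 < x + s := by linarith
    have hΓx : 0 < Real.Gamma x := Real.Gamma_pos_of_pos hx
    have hxx : x ^ s ≤ (x + s) ^ s := Real.rpow_le_rpow hx.le (by linarith) h0
    by_cases hs1 : s ≤ 1
    · have hfl := gamma_frac_lower hx h0 hs1
      have h2 : Real.Gamma x * x * (x + s) ^ (s - 1) ≤ Real.Gamma (x + s) := by
        have e0 : (x + s) ^ (1 - s) * (x + s) ^ (s - 1) = 1 := by
          rw [← Real.rpow_add hxs]; norm_num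
        calc Real.Gamma x * x * (x + s) ^ (s - 1)
            ≤ Real.Gamma (x + s) * (x + s) ^ (1 - s) * (x + s) ^ (s - 1) := by
              gcongr
          _ = Real.Gamma (x + s) * ((x + s) ^ (1 - s) * (x + s) ^ (s - 1)) := by ring
          _ = Real.Gamma (x + s) := by rw [e0, mul_one]
      refine le_trans ?_ h2
      have e1 : (x + s) ^ (s - 1) = (x + s) ^ s / (x + s) := by
        rw [Real.rpow_sub hxs, Real.rpow_one]
      rw [e1]
      rw [show Real.Gamma x * x ^ s * (x / (x + s)) = (Real.Gamma x * (x / (x + s))) * x ^ s by ring,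
        show Real.Gamma x * x * ((x + s) ^ s / (x + s)) = (Real.Gamma x * (x / (x + s))) * (x + s) ^ s by ring]
      exact mul_le_mul_of_nonneg_left hxx (by positivity)
    · have h1 : (0:ℝ) ≤ s - 1 := by linarith
      have hih := ih (x + 1) (s - 1) (by linarith) h1 (by push_cast at hsn ⊢; linarith)
      rw [show x + 1 + (s - 1) = x + s by ring, Real.Gamma_add_one hx.ne'] at hih
      refine le_trans ?_ hih
      have he : (x + 1) ^ (s - 1) * (x + 1) = (x + 1) ^ s := by
        rw [← Real.rpow_add_one (by linarith : x + (1:ℝ) ≠ 0) (s - 1), sub_add_cancel]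
      have hxx1 : x ^ s ≤ (x + 1) ^ s := Real.rpow_le_rpow hx.le (by linarith) h0
      calc Real.Gamma x * x ^ s * (x / (x + s))
          = (Real.Gamma x * (x / (x + s))) * x ^ s := by ring
        _ ≤ (Real.Gamma x * (x / (x + s))) * (x + 1) ^ s := by
            exact mul_le_mul_of_nonneg_left hxx1 (by positivity)
        _ = (Real.Gamma x * (x / (x + s))) * ((x + 1) ^ (s - 1) * (x + 1)) := by rw [he]
        _ = x * Real.Gamma x * (x + 1) ^ (s - 1) * ((x + 1) / (x + s)) := by ring

set_option maxHeartbeats 2000000 in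
/-- Divergence half of the paper's claim about the term-by-term Laplace transform
series of the Kilbas–Saigo function: for `ν > a`, the terms `cₙ Γ(1 + nν) |w|ⁿ`
tend to infinity for every real `w ≠ 0`. -/
theorem kilbasSaigo_laplace_series_divergent (a m l ν : ℝ) (ha : 0 < a) (hm : 0 < m)
    (hl : -1 / a < l) (hνa : a < ν)
    (c : ℕ → ℝ)
    (hc : ∀ n : ℕ, c n = ∏ k ∈ Finset.range n,
      Real.Gamma (1 + a * (k * m + l)) / Real.Gamma (1 + a * (k * m + l + 1))) :
    ∀ w : ℝ, w ≠ 0 →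
      Filter.Tendsto (fun n : ℕ => c n * Real.Gamma (1 + n * ν) * |w| ^ n)
        Filter.atTop Filter.atTop := by
  intro w hw
  have hw0 : 0 < |w| := abs_pos.mpr hw
  have hν : 0 < ν := lt_trans ha hνa
  have hal : (-1 : ℝ) < a * l := by
    calc (-1 : ℝ) = a * (-1 / a) := by field_simp
      _ < a * l := mul_lt_mul_of_pos_left hl ha
  have harg : ∀ r : ℝ, 0 ≤ r → 0 < 1 + a * (r * m + l) := by
    intro r hr
    nlinarith [mul_nonneg (mul_nonneg ha.le hr) hm.le]
  have harg2 : ∀ r : ℝ, 0 ≤ r → 0 < 1 + a * (r * m + l + 1) := by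
    intro r hr
    nlinarith [harg r hr]
  have hxpos : ∀ n : ℕ, 0 < 1 + (n : ℝ) * ν := by
    intro n
    positivity
  have hcpos : ∀ n : ℕ, 0 < c n := by
    intro n
    rw [hc]
    refine Finset.prod_pos fun k _ => div_pos ?_ ?_
    · exact Real.Gamma_pos_of_pos (harg k (Nat.cast_nonneg k))
    · exact Real.Gamma_pos_of_pos (harg2 k (Nat.cast_nonneg k))
  set t : ℕ → ℝ := fun n => c n * Real.Gamma (1 + (n : ℝ) * ν) * |w| ^ n with hT
  have htpos : ∀ n : ℕ, 0 < t n := by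
    intro n
    exact mul_pos (mul_pos (hcpos n) (Real.Gamma_pos_of_pos (hxpos n))) (pow_pos hw0 n)
  set ρ : ℕ → ℝ := fun n =>
    Real.Gamma (1 + a * ((n : ℝ) * m + l)) / Real.Gamma (1 + a * ((n : ℝ) * m + l + 1)) *
      (Real.Gamma (1 + ((n : ℝ) + 1) * ν) / Real.Gamma (1 + (n : ℝ) * ν)) * |w| with hR
  have hrec : ∀ n : ℕ, t (n + 1) = ρ n * t n := by
    intro n
    have hΓx : Real.Gamma (1 + (n : ℝ) * ν) ≠ 0 := (Real.Gamma_pos_of_pos (hxpos n)).ne'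
    have hΓy : Real.Gamma (1 + a * ((n : ℝ) * m + l + 1)) ≠ 0 :=
      (Real.Gamma_pos_of_pos (harg2 n (Nat.cast_nonneg n))).ne'
    have hcsucc : c (n + 1) = c n *
        (Real.Gamma (1 + a * ((n : ℝ) * m + l)) / Real.Gamma (1 + a * ((n : ℝ) * m + l + 1))) := by
      rw [hc, hc, Finset.prod_range_succ]
    have hcast : ((n + 1 : ℕ) : ℝ) = (n : ℝ) + 1 := by push_cast; ring
    show c (n + 1) * Real.Gamma (1 + ((n + 1 : ℕ) : ℝ) * ν) * |w| ^ (n + 1) = ρ n * t n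
    rw [hcsucc, hcast, pow_succ, hR, hT]
    field_simp
  -- lower bound for ρ
  set K : ℝ := 1 + a * (m + |l| + 1) with hKdef
  have hK0 : 0 < K := by positivity
  set C : ℝ := |w| * (1 / 2) * ν ^ ν * K ^ (-a) with hCdef
  have hC0 : 0 < C := by positivity
  have hρ_low : ∀ᶠ n : ℕ in Filter.atTop, C * (n : ℝ) ^ (ν - a) ≤ ρ n := by
    filter_upwards [Filter.eventually_ge_atTop 1] with n hn
    have hn1 : (1 : ℝ) ≤ (n : ℝ) := by exact_mod_cast hn
    have hn0 : (0 : ℝ) < (n : ℝ) := by linarith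
    set x : ℝ := 1 + (n : ℝ) * ν with hxdef
    set y : ℝ := 1 + a * ((n : ℝ) * m + l) with hydef
    have hx0 : 0 < x := hxpos n
    have hy0 : 0 < y := harg n (Nat.cast_nonneg n)
    have hya : 0 < y + a := by linarith
    have hΓx : 0 < Real.Gamma x := Real.Gamma_pos_of_pos hx0
    have hΓy : 0 < Real.Gamma y := Real.Gamma_pos_of_pos hy0
    have hΓya : 0 < Real.Gamma (y + a) := Real.Gamma_pos_of_pos hya
    have e1 : 1 + a * ((n : ℝ) * m + l + 1) = y + a := by rw [hydef]; ring
    have e2 : 1 + ((n : ℝ) + 1) * ν = x + ν := by rw [hxdef]; ring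
    have hub := gamma_shift_upper ⌈a⌉₊ y a hy0 ha.le (Nat.le_ceil a)
    have hlb := gamma_shift_lower ⌈ν⌉₊ x ν hx0 hν.le (Nat.le_ceil ν)
    have hq1 : (y + a) ^ (-a) ≤ Real.Gamma y / Real.Gamma (y + a) := by
      rw [Real.rpow_neg hya.le, inv_eq_one_div,
        div_le_div_iff₀ (Real.rpow_pos_of_pos hya a) hΓya, one_mul]
      exact hub
    have hq2 : x ^ ν * (x / (x + ν)) ≤ Real.Gamma (x + ν) / Real.Gamma x := by
      rw [le_div_iff₀ hΓx,
        show x ^ ν * (x / (x + ν)) * Real.Gamma x = Real.Gamma x * x ^ ν * (x / (x + ν)) by ring]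
      exact hlb
    -- elementary bounds
    have hyK : y + a ≤ K * (n : ℝ) := by
      rw [hydef, hKdef]
      nlinarith [le_abs_self l, mul_nonneg ha.le (abs_nonneg l),
        mul_nonneg (mul_nonneg ha.le (abs_nonneg l)) (sub_nonneg.mpr hn1),
        mul_nonneg ha.le (sub_nonneg.mpr (le_abs_self l)),
        mul_nonneg ha.le (sub_nonneg.mpr hn1),
        mul_nonneg (mul_nonneg ha.le hm.le) (sub_nonneg.mpr hn1)]
    have hb1 : (K * (n : ℝ)) ^ (-a) ≤ (y + a) ^ (-a) :=
      Real.rpow_le_rpow_of_nonpos hya hyK (neg_nonpos.mpr ha.le)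
    have hb2 : (ν * (n : ℝ)) ^ ν ≤ x ^ ν := by
      refine Real.rpow_le_rpow (by positivity) ?_ hν.le
      rw [hxdef]; nlinarith
    have hb3 : (1 : ℝ) / 2 ≤ x / (x + ν) := by
      have hνx : ν ≤ x := by rw [hxdef]; nlinarith
      rw [div_le_div_iff₀ (by norm_num : (0:ℝ) < 2) (by linarith : (0:ℝ) < x + ν)]
      linarith
    have hkey : C * (n : ℝ) ^ (ν - a)
        = (K * (n : ℝ)) ^ (-a) * ((ν * (n : ℝ)) ^ ν * (1 / 2)) * |w| := by
      rw [hCdef, Real.mul_rpow hK0.le hn0.le, Real.mul_rpow hν.le hn0.le,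
        show ν - a = ν + (-a) by ring, Real.rpow_add hn0]
      ring
    have hρn : ρ n = Real.Gamma y / Real.Gamma (y + a) * (Real.Gamma (x + ν) / Real.Gamma x) * |w| := by
      simp only [hR]
      rw [e1, e2, ← hydef, ← hxdef]
    calc C * (n : ℝ) ^ (ν - a)
        = (K * (n : ℝ)) ^ (-a) * ((ν * (n : ℝ)) ^ ν * (1 / 2)) * |w| := hkey
      _ ≤ (y + a) ^ (-a) * (x ^ ν * (x / (x + ν))) * |w| := by gcongr
      _ ≤ Real.Gamma y / Real.Gamma (y + a) * (Real.Gamma (x + ν) / Real.Gamma x) * |w| := by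
          gcongr
      _ = ρ n := hρn.symm
  have hφ : Filter.Tendsto (fun n : ℕ => C * (n : ℝ) ^ (ν - a)) Filter.atTop Filter.atTop := by
    refine Filter.Tendsto.const_mul_atTop hC0 ?_
    exact (tendsto_rpow_atTop (by linarith : (0:ℝ) < ν - a)).comp tendsto_natCast_atTop_atTop
  have hρ_top : Filter.Tendsto ρ Filter.atTop Filter.atTop :=
    tendsto_atTop_mono' _ hρ_low hφ
  obtain ⟨N, hN⟩ := Filter.eventually_atTop.mp (hρ_top.eventually_ge_atTop 2)
  have key : Filter.Tendsto (fun n : ℕ => t (n + N)) Filter.atTop Filter.atTop := by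
    refine tendsto_atTop_of_geom_le (c := 2) ?_ one_lt_two ?_
    · simpa using htpos N
    · intro k
      have h1 := hrec (k + N)
      have h2 := hN (k + N) (Nat.le_add_left N k)
      have h3 := (htpos (k + N)).le
      rw [show k + 1 + N = k + N + 1 from by omega, h1]
      nlinarith
  exact (Filter.tendsto_add_atTop_iff_nat N).mp key
end
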